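/- Let p be prime, 0 < a_1 ≤ ... ≤ a_n integers, t > 1 with t ≤ n/2, T ∈ H_t, and suppose Σ_{i∈T} a_i < p. Then for any residue k' the family V = {F ⊆ [2t-1] : Σ_{i∈F} a_i ≡ k' (mod p)} does not shatter T. -/

import Mathlib

section Aux
open Finset

lemma modDichotomy (s p r : ℕ) (hp : 0 < p) (h1 : s % p = r) (h2 : s < 2 * p) :
    s = r ∨ s = r + p := by
  have hd := Nat.div_add_mod s p
  have hq : s / p < 2 := by
    by_contra hq
    push_neg at hq
    have : 2 * p ≤ p * (s / p) := by
      calc 2 * p = p * 2 := by ring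
      _ ≤ p * (s / p) := Nat.mul_le_mul_left p hq
    omega
  interval_cases h : s / p <;> omega

lemma majLemma (n : ℕ) (a : ℕ → ℕ)
    (hmono : ∀ i j, 1 ≤ i → i ≤ j → j ≤ n → a i ≤ a j) :
    ∀ k (A B : Finset ℕ), A.card = k → A ⊆ Finset.Icc 1 n → B ⊆ Finset.Icc 1 n →
    B.card = A.card →
    (∀ x, (A.filter (· ≤ x)).card ≤ (B.filter (· ≤ x)).card) →
    ∑ i ∈ B, a i ≤ ∑ i ∈ A, a i := by
  intro k
  induction k with
  | zero =>
    intro A B hA _ _ hB _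
    have : A = ∅ := card_eq_zero.mp hA
    have : B = ∅ := card_eq_zero.mp (by omega)
    simp [this, ‹A = ∅›]
  | succ k ih =>
    intro A B hA hAn hBn hB hcount
    have hAne : A.Nonempty := card_pos.mp (by omega)
    have hBne : B.Nonempty := card_pos.mp (by omega)
    set aM := A.max' hAne with haM
    set bM := B.max' hBne with hbM
    have haMA : aM ∈ A := A.max'_mem hAne
    have hbMB : bM ∈ B := B.max'_mem hBne
    have hba : bM ≤ aM := by
      by_contra hlt
      push_neg at hlt
      have h1 : (A.filter (· ≤ aM)) = A := filter_eq_self.mpr (fun x hx => A.le_max' x hx)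
      have h2 : B.filter (· ≤ aM) ⊆ B.erase bM := by
        intro y hy
        simp only [mem_filter] at hy
        exact mem_erase.mpr ⟨by omega, hy.1⟩
      have := hcount aM
      rw [h1] at this
      have h3 := card_le_card h2
      have h4 := card_erase_of_mem hbMB
      omega
    have hrec : ∑ i ∈ B.erase bM, a i ≤ ∑ i ∈ A.erase aM, a i := by
      apply ih (A.erase aM) (B.erase bM)
      · rw [card_erase_of_mem haMA]; omega
      · exact (erase_subset _ _).trans hAn
      · exact (erase_subset _ _).trans hBn
      · rw [card_erase_of_mem haMA, card_erase_of_mem hbMB]; omega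
      · intro x
        rw [filter_erase, filter_erase]
        by_cases hx1 : aM ≤ x
        · have hA1 : A.filter (· ≤ x) = A := filter_eq_self.mpr
            (fun y hy => le_trans (A.le_max' y hy) hx1)
          have hB1 : B.filter (· ≤ x) = B := filter_eq_self.mpr
            (fun y hy => le_trans (B.le_max' y hy) (le_trans hba hx1))
          rw [hA1, hB1, card_erase_of_mem haMA, card_erase_of_mem hbMB]; omega
        · push_neg at hx1
          have hAe : (A.filter (· ≤ x)).erase aM = A.filter (· ≤ x) := by
            apply erase_eq_of_notMem
            simp only [mem_filter]
            omega
          rw [hAe]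
          by_cases hx2 : bM ≤ x
          · have hB1 : B.filter (· ≤ x) = B := filter_eq_self.mpr
              (fun y hy => le_trans (B.le_max' y hy) hx2)
            rw [hB1, card_erase_of_mem hbMB]
            have hsub : A.filter (· ≤ x) ⊆ A.erase aM := by
              intro y hy
              simp only [mem_filter] at hy
              exact mem_erase.mpr ⟨by omega, hy.1⟩
            have := card_le_card hsub
            rw [card_erase_of_mem haMA] at this
            omega
          · push_neg at hx2
            have hBe : (B.filter (· ≤ x)).erase bM = B.filter (· ≤ x) := by
              apply erase_eq_of_notMem
              simp only [mem_filter]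
              omega
            rw [hBe]
            exact hcount x
    have h1 : ∑ i ∈ A.erase aM, a i + a aM = ∑ i ∈ A, a i := sum_erase_add _ _ haMA
    have h2 : ∑ i ∈ B.erase bM, a i + a bM = ∑ i ∈ B, a i := sum_erase_add _ _ hbMB
    have hab : a bM ≤ a aM := by
      have h3 := hAn haMA
      have h4 := hBn hbMB
      simp only [mem_Icc] at h3 h4
      exact hmono bM aM h4.1 hba h3.2
    omega

end Aux

def Ht (n t : ℕ) (T : Finset ℕ) : Prop :=
  T ⊆ Finset.Icc 1 n ∧ T.card = t ∧
  (∀ s ∈ T, (T.filter (· ≤ s)).card < t → 2 * (T.filter (· ≤ s)).card ≤ s) ∧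
  (∀ s ∈ T, (T.filter (· ≤ s)).card = t → s < 2 * t)

open Finset in
/-- let `p` be prime, `0 < a₁ ≤ … ≤ a_n`, `1 < t ≤ n/2`,
`T ∈ H_t` with `Σ_{i∈T} aᵢ < p`.  Then for any residue `k'`, the family
`{F ⊆ [2t-1] : Σ_{i∈F} aᵢ ≡ k' (mod p)}` does not shatter `T`. -/
theorem stmt11 (n t p : ℕ) (hp : p.Prime) (a : ℕ → ℕ)
    (hpos : ∀ i ∈ Finset.Icc 1 n, 0 < a i)
    (hmono : ∀ i j, 1 ≤ i → i ≤ j → j ≤ n → a i ≤ a j)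
    (ht : 1 < t) (htn : 2 * t ≤ n) (T : Finset ℕ) (hT : Ht n t T)
    (hsum : (∑ i ∈ T, a i) < p) (k' : ℕ) :
    ¬ (∀ Y ⊆ T, ∃ F, F ⊆ Finset.Icc 1 (2 * t - 1) ∧
        (∑ i ∈ F, a i) ≡ k' [MOD p] ∧ F ∩ T = Y) := by
  intro h
  obtain ⟨hTsub, hTcard, hT3, hT4⟩ := hT
  have hp0 : 0 < p := hp.pos
  have hTne : T.Nonempty := card_pos.mp (by omega)
  set M := T.max' hTne with hMdef
  have hMT : M ∈ T := T.max'_mem hTne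
  have hMn : M ∈ Finset.Icc 1 n := hTsub hMT
  have hM1n : 1 ≤ M ∧ M ≤ n := by simpa using hMn
  -- T.filter (≤ M) = T
  have hfM : T.filter (· ≤ M) = T := filter_eq_self.mpr (fun x hx => T.le_max' x hx)
  have hMlt : M < 2 * t := hT4 M hMT (by rw [hfM, hTcard])
  -- second max
  have hT'ne : (T.erase M).Nonempty := by
    apply card_pos.mp
    rw [card_erase_of_mem hMT]
    omega
  set M' := (T.erase M).max' hT'ne with hM'def
  have hM'e : M' ∈ T.erase M := (T.erase M).max'_mem hT'ne
  have hM'T : M' ∈ T := mem_of_mem_erase hM'e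
  have hM'lt : M' < M := lt_of_le_of_ne (T.le_max' M' hM'T) (mem_erase.mp hM'e).1
  have hfM' : T.filter (· ≤ M') = T.erase M := by
    ext y
    simp only [mem_filter, mem_erase]
    constructor
    · rintro ⟨hy, hle⟩; exact ⟨by omega, hy⟩
    · rintro ⟨hne, hy⟩
      refine ⟨hy, (T.erase M).le_max' y (mem_erase.mpr ⟨hne, hy⟩)⟩
  have hM'card : (T.filter (· ≤ M')).card = t - 1 := by
    rw [hfM', card_erase_of_mem hMT, hTcard]
  have hM'big : 2 * (t - 1) ≤ M' := by
    have := hT3 M' hM'T (by omega)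
    omega
  have hM : M = 2 * t - 1 := by omega
  -- T ⊆ Icc 1 (2t-1)
  have hTsub2 : T ⊆ Finset.Icc 1 (2 * t - 1) := by
    intro s hs
    have h1 := hTsub hs
    simp only [mem_Icc] at h1 ⊢
    exact ⟨h1.1, by have := T.le_max' s hs; omega⟩
  set C := Finset.Icc 1 (2 * t - 1) \ T with hCdef
  have hIcard : (Finset.Icc 1 (2 * t - 1)).card = 2 * t - 1 := by
    rw [Nat.card_Icc]; omega
  have hCcard : C.card = t - 1 := by
    rw [hCdef, card_sdiff_of_subset hTsub2, hIcard, hTcard]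
    omega
  have hCn : C ⊆ Finset.Icc 1 n := by
    intro y hy
    have := (sdiff_subset : C ⊆ Finset.Icc 1 (2*t-1)) hy
    simp only [mem_Icc] at this ⊢
    omega
  -- count condition
  have hcc : ∀ x, ((T.erase M).filter (· ≤ x)).card ≤ (C.filter (· ≤ x)).card := by
    intro x
    by_cases hx : 2 * t - 1 ≤ x
    · have h1 : (T.erase M).filter (· ≤ x) = T.erase M := by
        apply filter_eq_self.mpr
        intro y hy
        have := hTsub2 (mem_of_mem_erase hy)
        simp only [mem_Icc] at this; omega
      have h2 : C.filter (· ≤ x) = C := by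
        apply filter_eq_self.mpr
        intro y hy
        have := (sdiff_subset : C ⊆ Finset.Icc 1 (2*t-1)) hy
        simp only [mem_Icc] at this; omega
      rw [h1, h2, hCcard, card_erase_of_mem hMT, hTcard]
    · push_neg at hx
      have h1 : (T.erase M).filter (· ≤ x) = T.filter (· ≤ x) := by
        rw [filter_erase]
        apply erase_eq_of_notMem
        simp only [mem_filter]
        omega
      rw [h1]
      set k := (T.filter (· ≤ x)).card with hk
      -- C.filter (≤ x) = Icc 1 x \ T
      have h2 : C.filter (· ≤ x) = Finset.Icc 1 x \ T := by
        ext y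
        simp only [hCdef, mem_filter, mem_sdiff, mem_Icc]
        constructor
        · rintro ⟨⟨⟨h1', _⟩, h3'⟩, h4'⟩; exact ⟨⟨h1', h4'⟩, h3'⟩
        · rintro ⟨⟨h1', h2'⟩, h3'⟩; exact ⟨⟨⟨h1', by omega⟩, h3'⟩, h2'⟩
      have h3 : Finset.Icc 1 x ∩ T = T.filter (· ≤ x) := by
        ext y
        simp only [mem_inter, mem_filter, mem_Icc]
        constructor
        · rintro ⟨⟨_, h2'⟩, h3'⟩; exact ⟨h3', h2'⟩
        · rintro ⟨h1', h2'⟩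
          have := hTsub h1'
          simp only [mem_Icc] at this
          exact ⟨⟨this.1, h2'⟩, h1'⟩
      have h4 := Finset.card_sdiff_add_card_inter (Finset.Icc 1 x) T
      rw [h3, Nat.card_Icc, ← h2] at h4
      -- need 2k ≤ x
      rcases Nat.eq_zero_or_pos k with hk0 | hk0
      · omega
      · have hne : (T.filter (· ≤ x)).Nonempty := card_pos.mp hk0
        set s := (T.filter (· ≤ x)).max' hne with hs
        have hsmem := (T.filter (· ≤ x)).max'_mem hne
        simp only [mem_filter] at hsmem
        have h5 : T.filter (· ≤ s) = T.filter (· ≤ x) := by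
          ext y
          simp only [mem_filter]
          constructor
          · rintro ⟨hy, hle⟩; exact ⟨hy, by omega⟩
          · rintro ⟨hy, hle⟩
            exact ⟨hy, (T.filter (· ≤ x)).le_max' y (mem_filter.mpr ⟨hy, hle⟩)⟩
        have hklt : k < t := by
          have : M ∉ T.filter (· ≤ x) := by simp only [mem_filter]; omega
          have hsub : T.filter (· ≤ x) ⊆ T.erase M := by
            intro y hy
            simp only [mem_filter] at hy
            apply mem_erase.mpr
            refine ⟨?_, hy.1⟩
            intro heq
            subst heq
            exact this (mem_filter.mpr hy)
          have := card_le_card hsub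
          rw [card_erase_of_mem hMT, hTcard] at this
          omega
        have h6 := hT3 s hsmem.1 (by rw [h5]; omega)
        rw [h5] at h6
        omega
  -- majorization
  have hmaj : ∑ i ∈ C, a i ≤ ∑ i ∈ T.erase M, a i := by
    apply majLemma n a hmono (t - 1) (T.erase M) C
    · rw [card_erase_of_mem hMT, hTcard]
    · exact (erase_subset _ _).trans hTsub
    · exact hCn
    · rw [hCcard, card_erase_of_mem hMT, hTcard]
    · exact hcc
  have hsplit : ∑ i ∈ T.erase M, a i + a M = ∑ i ∈ T, a i := sum_erase_add _ _ hMT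
  have haM : 0 < a M := hpos M hMn
  set sT := ∑ i ∈ T, a i with hsT
  set sC := ∑ i ∈ C, a i with hsC
  have hCT : sC + a M ≤ sT := by omega
  set r := k' % p with hr
  -- key decomposition
  have key : ∀ Y F, F ⊆ Finset.Icc 1 (2 * t - 1) → (∑ i ∈ F, a i) ≡ k' [MOD p] →
      F ∩ T = Y →
      (∑ i ∈ Y, a i ≤ ∑ i ∈ F, a i) ∧ (∑ i ∈ F, a i ≤ ∑ i ∈ Y, a i + sC) ∧
      ((∑ i ∈ F, a i) = r ∨ (∑ i ∈ F, a i) = r + p) := by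
    intro Y F hFsub hFmod hFcap
    have hdec : ∑ i ∈ F ∩ T, a i + ∑ i ∈ F \ T, a i = ∑ i ∈ F, a i :=
      sum_inter_add_sum_sdiff F T a
    rw [hFcap] at hdec
    have hFC : F \ T ⊆ C := by
      intro y hy
      rw [hCdef, mem_sdiff]
      rw [mem_sdiff] at hy
      exact ⟨hFsub hy.1, hy.2⟩
    have hFCle : ∑ i ∈ F \ T, a i ≤ sC := sum_le_sum_of_subset hFC
    have hYT : Y ⊆ T := by rw [← hFcap]; exact inter_subset_right
    have hYle : ∑ i ∈ Y, a i ≤ sT := sum_le_sum_of_subset hYT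
    have hlt2 : ∑ i ∈ F, a i < 2 * p := by omega
    have hmod : (∑ i ∈ F, a i) % p = r := hFmod
    exact ⟨by omega, by omega, modDichotomy _ p r hp0 hmod hlt2⟩
  -- r ≤ sC
  have hrC : r ≤ sC := by
    obtain ⟨F₀, hF₀sub, hF₀mod, hF₀cap⟩ := h ∅ (empty_subset T)
    obtain ⟨h1', h2', h3'⟩ := key ∅ F₀ hF₀sub hF₀mod hF₀cap
    simp only [sum_empty] at h2'
    rcases h3' with h | h
    · omega
    · omega
  -- the descent
  have claimB : ∀ k Y, Y ⊆ T → Y.card ≤ k →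
      (∃ F, F ⊆ Finset.Icc 1 (2 * t - 1) ∧ (∑ i ∈ F, a i) ≡ k' [MOD p] ∧
        F ∩ T = Y ∧ (∑ i ∈ F, a i) = r + p) → False := by
    intro k
    induction k with
    | zero =>
      rintro Y hYT hYc ⟨F, hFsub, hFmod, hFcap, hFval⟩
      have hY : Y = ∅ := card_eq_zero.mp (by omega)
      obtain ⟨_, h2', _⟩ := key Y F hFsub hFmod hFcap
      rw [hY] at h2'
      simp only [sum_empty] at h2'
      omega
    | succ k ih =>
      rintro Y hYT hYc ⟨F, hFsub, hFmod, hFcap, hFval⟩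
      rcases Y.eq_empty_or_nonempty with hY | ⟨x, hx⟩
      · obtain ⟨_, h2', _⟩ := key Y F hFsub hFmod hFcap
        rw [hY] at h2'
        simp only [sum_empty] at h2'
        omega
      · set Y' := Y.erase x with hY'
        have hY'T : Y' ⊆ T := (erase_subset _ _).trans hYT
        have hY'c : Y'.card ≤ k := by
          rw [hY', card_erase_of_mem hx]; omega
        obtain ⟨F', hF'sub, hF'mod, hF'cap⟩ := h Y' hY'T
        obtain ⟨h1', h2', h3'⟩ := key Y' F' hF'sub hF'mod hF'cap
        rcases h3' with hcase | hcase
        · -- sum F' = r : contradiction via jump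
          obtain ⟨hl, hu, _⟩ := key Y F hFsub hFmod hFcap
          have hxT : x ∈ T := hYT hx
          have hxn := hTsub hxT
          simp only [mem_Icc] at hxn
          have hax : a x ≤ a M := hmono x M hxn.1 (T.le_max' x hxT) hM1n.2
          have hYsplit : ∑ i ∈ Y', a i + a x = ∑ i ∈ Y, a i :=
            sum_erase_add _ _ hx
          omega
        · exact ih Y' hY'T hY'c ⟨F', hF'sub, hF'mod, hF'cap, hcase⟩
  -- apply to T
  obtain ⟨F, hFsub, hFmod, hFcap⟩ := h T (Finset.Subset.refl T)
  obtain ⟨h1', h2', h3'⟩ := key T F hFsub hFmod hFcap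
  rcases h3' with hcase | hcase
  · omega
  · exact claimB T.card T (Finset.Subset.refl T) le_rfl ⟨F, hFsub, hFmod, hFcap, hcase⟩
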